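/- Let ζ = e^{2πi/5} and Z₀ = [[ζ, ζ+ζ³],[ζ², ζ²+ζ]]⁻¹ · [[ζ², ζ⁴],[ζ⁴, ζ³]] ∈ 𝔥₂. Then Θ(0, Z₀; 0, 0) ≠ 0. -/

import Mathlib

open Matrix Complex

noncomputable section

/-- `e z = exp(2πiz)` -/
def e (z : ℂ) : ℂ := Complex.exp (2 * Real.pi * Complex.I * z)

/-- The Siegel upper half-space: symmetric complex matrices with positive definite
imaginary part. -/
def SiegelHalfSpace (g : ℕ) : Set (Matrix (Fin g) (Fin g) ℂ) :=
  {Z | Z.IsSymm ∧ (Matrix.of fun i j => (Z i j).im).PosDef}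

/-- The theta function `Θ(u, Z; r, s)`. -/
def Theta {g : ℕ} (u : Fin g → ℂ) (Z : Matrix (Fin g) (Fin g) ℂ)
    (r s : Fin g → ℝ) : ℂ :=
  ∑' x : Fin g → ℤ,
    e ((fun i => (x i : ℂ) + (r i : ℂ)) ⬝ᵥ Z.mulVec (fun i => (x i : ℂ) + (r i : ℂ)) / 2
      + (fun i => (x i : ℂ) + (r i : ℂ)) ⬝ᵥ (u + fun i => (s i : ℂ)))

/-- The theta constant `Φ_{[r;s]}(Z)`. -/
def PhiTheta {g : ℕ} (r s : Fin g → ℝ) (Z : Matrix (Fin g) (Fin g) ℂ) : ℂ :=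
  Theta 0 Z r s / Theta 0 Z 0 0

/-- The standard symplectic matrix `J`. -/
def Jmat (g : ℕ) : Matrix (Fin g ⊕ Fin g) (Fin g ⊕ Fin g) ℤ :=
  Matrix.fromBlocks 0 (-1) 1 0

/-- Membership in `Sp_{2g}(ℤ)`. -/
def IsSymplectic {g : ℕ} (γ : Matrix (Fin g ⊕ Fin g) (Fin g ⊕ Fin g) ℤ) : Prop :=
  γᵀ * Jmat g * γ = Jmat g

/-- `ζ = e^{2πi/5}`. -/
def zeta5 : ℂ := Complex.exp (2 * Real.pi * Complex.I / 5)

/-- The CM point `Z₀` attached to `ℚ(ζ₅)`. -/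
def Zcm : Matrix (Fin 2) (Fin 2) ℂ :=
  (!![zeta5, zeta5 + zeta5 ^ 3; zeta5 ^ 2, zeta5 ^ 2 + zeta5])⁻¹ *
    !![zeta5 ^ 2, zeta5 ^ 4; zeta5 ^ 4, zeta5 ^ 3]

/-! ### Auxiliary material for the proof -/

section Aux

lemma zeta5_pow_five : zeta5 ^ 5 = 1 := by
  rw [zeta5, ← Complex.exp_nat_mul]
  rw [show (5:ℕ) * (2 * ↑Real.pi * Complex.I / 5) = 2 * ↑Real.pi * Complex.I by push_cast; ring]
  exact Complex.exp_two_pi_mul_I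

lemma zeta5_sq_ne_one : zeta5 ^ 2 ≠ 1 := by
  rw [zeta5, ← Complex.exp_nat_mul]
  intro h
  rw [Complex.exp_eq_one_iff] at h
  obtain ⟨n, hn⟩ := h
  have hpI : (Real.pi : ℂ) * Complex.I ≠ 0 := by
    simp [Real.pi_ne_zero, Complex.I_ne_zero]
  have h4 : (4 : ℂ) * ((Real.pi : ℂ) * Complex.I)
      = ((10 * n : ℤ) : ℂ) * ((Real.pi:ℂ) * Complex.I) := by
    push_cast
    linear_combination 5 * hn
  have := mul_right_cancel₀ hpI h4
  have h10 : (4 : ℤ) = 10 * n := by exact_mod_cast this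
  omega

lemma zeta5_ne_one : zeta5 ≠ 1 := by
  intro h
  exact zeta5_sq_ne_one (by rw [h]; ring)

lemma zeta5_sum : 1 + zeta5 + zeta5 ^ 2 + zeta5 ^ 3 + zeta5 ^ 4 = 0 := by
  have h5 := zeta5_pow_five
  have h1 : zeta5 - 1 ≠ 0 := sub_ne_zero.mpr zeta5_ne_one
  have h : (zeta5 - 1) * (1 + zeta5 + zeta5 ^ 2 + zeta5 ^ 3 + zeta5 ^ 4) = 0 := by
    linear_combination h5
  rcases mul_eq_zero.mp h with h | h
  · exact absurd h h1
  · exact h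

/-- The explicit value of the CM point. -/
def Mmat : Matrix (Fin 2) (Fin 2) ℂ :=
  !![zeta5 ^ 2 - zeta5 ^ 3, -1 - zeta5 ^ 2; -1 - zeta5 ^ 2, -zeta5 ^ 4]

lemma Zcm_eq : Zcm = Mmat := by
  set A : Matrix (Fin 2) (Fin 2) ℂ :=
    !![zeta5, zeta5 + zeta5 ^ 3; zeta5 ^ 2, zeta5 ^ 2 + zeta5] with hA
  have hdet : A.det ≠ 0 := by
    rw [hA, Matrix.det_fin_two_of]
    intro h
    apply zeta5_sq_ne_one
    linear_combination h + zeta5_pow_five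
  have hAM : A * Mmat = !![zeta5 ^ 2, zeta5 ^ 4; zeta5 ^ 4, zeta5 ^ 3] := by
    rw [hA, Mmat]
    ext i j
    fin_cases i <;> fin_cases j <;>
      simp [Matrix.mul_apply, Fin.sum_univ_two]
    · linear_combination (-zeta5) * zeta5_sum
    · linear_combination (-zeta5 + zeta5 ^ 2 - zeta5 ^ 3) * zeta5_sum
    · linear_combination (-zeta5) * zeta5_sum
    · linear_combination (-zeta5 ^ 2) * zeta5_sum
  have h : Zcm = A⁻¹ * (A * Mmat) := by rw [hAM]; rfl
  rw [h, ← Matrix.mul_assoc, Matrix.nonsing_inv_mul A (isUnit_iff_ne_zero.mpr hdet),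
    Matrix.one_mul]

lemma norm_e (z : ℂ) : ‖e z‖ = Real.exp (-(2 * Real.pi * z.im)) := by
  rw [e, Complex.norm_exp]
  congr 1
  simp [Complex.mul_re, Complex.mul_im]

lemma zeta5_pow_im (k : ℕ) : (zeta5 ^ k).im = Real.sin (2 * Real.pi * k / 5) := by
  rw [zeta5, ← Complex.exp_nat_mul]
  have h : (k : ℂ) * (2 * (Real.pi:ℂ) * Complex.I / 5)
      = ((2 * Real.pi * k / 5 : ℝ) : ℂ) * Complex.I := by
    push_cast; ring
  rw [h, Complex.exp_ofReal_mul_I_im]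

lemma im2 : (zeta5 ^ 2).im = Real.sin (Real.pi / 5) := by
  rw [zeta5_pow_im 2, show 2 * Real.pi * (2:ℕ) / 5 = Real.pi - Real.pi / 5 by push_cast; ring,
    Real.sin_pi_sub]

lemma im3 : (zeta5 ^ 3).im = -Real.sin (Real.pi / 5) := by
  rw [zeta5_pow_im 3, show 2 * Real.pi * (3:ℕ) / 5 = Real.pi + Real.pi / 5 by push_cast; ring,
    Real.sin_add]
  simp

lemma im4 : (zeta5 ^ 4).im = -Real.sin (2 * Real.pi / 5) := by
  rw [zeta5_pow_im 4,
    show 2 * Real.pi * (4:ℕ) / 5 = 2 * Real.pi - 2 * Real.pi / 5 by push_cast; ring,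
    Real.sin_sub]
  simp

/-- `s₁ = sin(π/5)`. -/
def s1 : ℝ := Real.sin (Real.pi / 5)

/-- `s₂ = sin(2π/5)`. -/
def s2 : ℝ := Real.sin (2 * Real.pi / 5)

lemma s1_nonneg : 0 ≤ s1 := by
  apply Real.sin_nonneg_of_nonneg_of_le_pi
  · positivity
  · nlinarith [Real.pi_pos]

lemma s1_ge : (0.58 : ℝ) ≤ s1 := by
  have hcos : Real.cos (Real.pi / 5) = (1 + Real.sqrt 5) / 4 := Real.cos_pi_div_five
  have hsq : s1 ^ 2 = 1 - ((1 + Real.sqrt 5) / 4) ^ 2 := by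
    rw [s1, Real.sin_sq, hcos]
  have h5 : Real.sqrt 5 ^ 2 = 5 := Real.sq_sqrt (by norm_num)
  have h5' : Real.sqrt 5 ≤ 2.2361 := by nlinarith [Real.sqrt_nonneg 5]
  nlinarith [s1_nonneg, Real.sqrt_nonneg 5]

lemma s1_le_s2 : s1 ≤ s2 := by
  apply le_of_lt
  apply Real.sin_lt_sin_of_lt_of_le_pi_div_two
  · nlinarith [Real.pi_pos]
  · nlinarith [Real.pi_pos]
  · nlinarith [Real.pi_pos]

/-- `q = exp(-π sin(π/5))`. -/
def qq : ℝ := Real.exp (-(Real.pi * s1))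

lemma qq_nonneg : 0 ≤ qq := (Real.exp_pos _).le

lemma qq_le : qq ≤ 1 / 6 := by
  have hps : (1.8212 : ℝ) ≤ Real.pi * s1 := by
    nlinarith [Real.pi_gt_d6, s1_ge, s1_nonneg, Real.pi_pos]
  have hexp : (6 : ℝ) ≤ Real.exp (Real.pi * s1) := by
    calc (6:ℝ) ≤ (∑ i ∈ Finset.range 7, (1.8212:ℝ) ^ i / (Nat.factorial i)) := by
            simp only [Finset.sum_range_succ, Finset.sum_range_zero, Nat.factorial]
            norm_num
      _ ≤ Real.exp (1.8212 : ℝ) := Real.sum_le_exp_of_nonneg (by norm_num) 7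
      _ ≤ Real.exp (Real.pi * s1) := Real.exp_le_exp.mpr hps
  rw [qq, Real.exp_neg]
  rw [inv_le_comm₀ (Real.exp_pos _) (by norm_num)]
  linarith

lemma qq_lt_one : qq < 1 := lt_of_le_of_lt qq_le (by norm_num)

/-- `u j = q^|j|`. -/
def u : ℤ → ℝ := fun j => qq ^ j.natAbs

lemma u_nonneg (j : ℤ) : 0 ≤ u j := pow_nonneg qq_nonneg _

lemma u_neg_succ (n : ℕ) : u (-((n : ℤ) + 1)) = qq * qq ^ n := by
  have h : (-((n : ℤ) + 1)).natAbs = n + 1 := by omega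
  rw [u]
  simp only [h, pow_succ]
  ring

lemma summable_u : Summable u := by
  apply Summable.of_nat_of_neg_add_one
  · simpa [u] using summable_geometric_of_lt_one qq_nonneg qq_lt_one
  · have h : (fun n : ℕ => u (-((n : ℤ) + 1))) = fun n : ℕ => qq * qq ^ n := by
      funext n; exact u_neg_succ n
    rw [h]
    exact (summable_geometric_of_lt_one qq_nonneg qq_lt_one).mul_left qq

lemma tsum_u_le : ∑' j, u j ≤ 7 / 5 := by
  have h1 : Summable (fun n : ℕ => u n) := by
    simpa [u] using summable_geometric_of_lt_one qq_nonneg qq_lt_one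
  have h2 : Summable (fun n : ℕ => u (-((n : ℤ) + 1))) := by
    have h : (fun n : ℕ => u (-((n : ℤ) + 1))) = fun n : ℕ => qq * qq ^ n := by
      funext n; exact u_neg_succ n
    rw [h]
    exact (summable_geometric_of_lt_one qq_nonneg qq_lt_one).mul_left qq
  rw [tsum_of_nat_of_neg_add_one h1 h2]
  have e1 : (∑' n : ℕ, u n) = (1 - qq)⁻¹ := by
    simp only [u, Int.natAbs_natCast]
    exact tsum_geometric_of_lt_one qq_nonneg qq_lt_one
  have e2 : (∑' n : ℕ, u (-((n : ℤ) + 1))) = qq * (1 - qq)⁻¹ := by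
    rw [tsum_congr u_neg_succ, tsum_mul_left, tsum_geometric_of_lt_one qq_nonneg qq_lt_one]
  rw [e1, e2]
  have hq : (0:ℝ) < 1 - qq := by linarith [qq_lt_one]
  have ht : (1 - qq)⁻¹ ≤ 6 / 5 := by
    rw [show (6:ℝ)/5 = ((5:ℝ)/6)⁻¹ by norm_num]
    apply inv_anti₀ (by norm_num)
    linarith [qq_le]
  have ht0 : 0 ≤ (1 - qq)⁻¹ := by positivity
  nlinarith [mul_le_mul_of_nonneg_right qq_le ht0]

/-- Product majorant on `ℤ × ℤ`. -/
def G : ℤ × ℤ → ℝ := fun p => u p.1 * u p.2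

lemma summable_G : Summable G :=
  summable_u.mul_of_nonneg summable_u u_nonneg u_nonneg

lemma tsum_G_le : ∑' p, G p ≤ 49 / 25 := by
  have h := (Summable.tsum_mul_tsum summable_u summable_u summable_G).symm
  have h0 : 0 ≤ ∑' j, u j := tsum_nonneg u_nonneg
  calc ∑' p, G p = (∑' j, u j) * (∑' j, u j) := h
    _ ≤ (7/5 : ℝ) * (7/5) := by nlinarith [tsum_u_le]
    _ = 49 / 25 := by norm_num

/-- The shear change of variables. -/
def Eq2 : (Fin 2 → ℤ) ≃ ℤ × ℤ where
  toFun x := (x 0, x 0 - x 1)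
  invFun p := ![p.1, p.1 - p.2]
  left_inv x := by
    funext i
    fin_cases i <;> simp
  right_inv p := by simp

/-- Majorant on `Fin 2 → ℤ`. -/
def gmaj : (Fin 2 → ℤ) → ℝ := fun x => G (Eq2 x)

lemma gmaj_nonneg (x : Fin 2 → ℤ) : 0 ≤ gmaj x :=
  mul_nonneg (u_nonneg _) (u_nonneg _)

lemma summable_gmaj : Summable gmaj := summable_G.comp_injective Eq2.injective

lemma tsum_gmaj_le : ∑' x, gmaj x ≤ 49 / 25 := by
  have h : ∑' x, gmaj x = ∑' p, G p := Eq2.tsum_eq G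
  rw [h]
  exact tsum_G_le

lemma gmaj_zero : gmaj 0 = 1 := by
  simp [gmaj, G, Eq2, u]

lemma exp_sq_le (j : ℤ) : Real.exp (-(Real.pi * s1) * (j:ℝ)^2) ≤ u j := by
  have h1 : (j:ℝ)^2 = ((j.natAbs ^ 2 : ℕ) : ℝ) := by
    push_cast
    rw [Nat.cast_natAbs]
    simp [sq_abs]
  rw [h1, mul_comm, Real.exp_nat_mul]
  have h2 : j.natAbs ≤ j.natAbs ^ 2 := by nlinarith [Nat.zero_le j.natAbs]
  exact pow_le_pow_of_le_one qq_nonneg qq_lt_one.le h2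

lemma norm_term (x : Fin 2 → ℤ) :
    ‖e ((fun i => (x i : ℂ) + ((0 : Fin 2 → ℝ) i : ℂ)) ⬝ᵥ
        Zcm.mulVec (fun i => (x i : ℂ) + ((0 : Fin 2 → ℝ) i : ℂ)) / 2
      + (fun i => (x i : ℂ) + ((0 : Fin 2 → ℝ) i : ℂ)) ⬝ᵥ
        ((0 : Fin 2 → ℂ) + fun i => (((0 : Fin 2 → ℝ) i : ℝ) : ℂ)))‖
    = Real.exp (-(Real.pi * (s1 * (x 0 : ℝ) ^ 2 + s1 * ((x 0 : ℝ) - (x 1 : ℝ)) ^ 2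
        + (s2 - s1) * (x 1 : ℝ) ^ 2))) := by
  have hw : ((fun i => (x i : ℂ) + ((0 : Fin 2 → ℝ) i : ℂ)) ⬝ᵥ
        Zcm.mulVec (fun i => (x i : ℂ) + ((0 : Fin 2 → ℝ) i : ℂ)) / 2
      + (fun i => (x i : ℂ) + ((0 : Fin 2 → ℝ) i : ℂ)) ⬝ᵥ
        ((0 : Fin 2 → ℂ) + fun i => (((0 : Fin 2 → ℝ) i : ℝ) : ℂ)))
      = ((x 0 : ℂ) * (x 0 : ℂ) * (zeta5 ^ 2 - zeta5 ^ 3)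
        + (x 0 : ℂ) * (x 1 : ℂ) * (-1 - zeta5 ^ 2) * 2
        + (x 1 : ℂ) * (x 1 : ℂ) * (-zeta5 ^ 4)) / 2 := by
    simp [Zcm_eq, Mmat, dotProduct, Matrix.mulVec, Fin.sum_univ_two]
    ring
  rw [hw, norm_e]
  congr 1
  have him : (((x 0 : ℂ) * (x 0 : ℂ) * (zeta5 ^ 2 - zeta5 ^ 3)
        + (x 0 : ℂ) * (x 1 : ℂ) * (-1 - zeta5 ^ 2) * 2
        + (x 1 : ℂ) * (x 1 : ℂ) * (-zeta5 ^ 4)) / 2).im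
      = ((x 0 : ℝ) * (x 0 : ℝ) * (s1 - (-s1))
        + (x 0 : ℝ) * (x 1 : ℝ) * (-s1) * 2
        + (x 1 : ℝ) * (x 1 : ℝ) * s2) / 2 := by
    have h2 : ∀ w : ℂ, (w / 2).im = w.im / 2 := by
      intro w
      simp [Complex.div_im, Complex.normSq]
    rw [h2]
    simp [Complex.add_im, Complex.mul_im, Complex.sub_im, Complex.neg_im,
      Complex.mul_re, Complex.sub_re, Complex.neg_re, Complex.one_re, Complex.one_im,
      Complex.intCast_im, Complex.intCast_re, im2, im3, im4, s1, s2]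
  rw [him]
  ring

lemma term_le_gmaj (x : Fin 2 → ℤ) :
    Real.exp (-(Real.pi * (s1 * (x 0 : ℝ) ^ 2 + s1 * ((x 0 : ℝ) - (x 1 : ℝ)) ^ 2
        + (s2 - s1) * (x 1 : ℝ) ^ 2))) ≤ gmaj x := by
  have hsplit : Real.exp (-(Real.pi * (s1 * (x 0 : ℝ) ^ 2 + s1 * ((x 0 : ℝ) - (x 1 : ℝ)) ^ 2
        + (s2 - s1) * (x 1 : ℝ) ^ 2)))
      = Real.exp (-(Real.pi * s1) * (x 0 : ℝ) ^ 2)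
        * Real.exp (-(Real.pi * s1) * (((x 0 - x 1 : ℤ)) : ℝ) ^ 2)
        * Real.exp (-(Real.pi * ((s2 - s1) * (x 1 : ℝ) ^ 2))) := by
    rw [← Real.exp_add, ← Real.exp_add]
    congr 1
    push_cast
    ring
  rw [hsplit]
  have h3 : Real.exp (-(Real.pi * ((s2 - s1) * (x 1 : ℝ) ^ 2))) ≤ 1 := by
    rw [Real.exp_le_one_iff]
    have hnn : 0 ≤ Real.pi * ((s2 - s1) * (x 1 : ℝ) ^ 2) :=
      mul_nonneg Real.pi_pos.le (mul_nonneg (by linarith [s1_le_s2]) (sq_nonneg _))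
    linarith
  have h1 := exp_sq_le (x 0)
  have h2 := exp_sq_le (x 0 - x 1)
  have hg : gmaj x = u (x 0) * u (x 0 - x 1) := rfl
  rw [hg]
  calc Real.exp (-(Real.pi * s1) * (x 0 : ℝ) ^ 2)
        * Real.exp (-(Real.pi * s1) * (((x 0 - x 1 : ℤ)) : ℝ) ^ 2)
        * Real.exp (-(Real.pi * ((s2 - s1) * (x 1 : ℝ) ^ 2)))
      ≤ Real.exp (-(Real.pi * s1) * (x 0 : ℝ) ^ 2)
        * Real.exp (-(Real.pi * s1) * (((x 0 - x 1 : ℤ)) : ℝ) ^ 2) * 1 := by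
        apply mul_le_mul_of_nonneg_left h3
        positivity
    _ = Real.exp (-(Real.pi * s1) * (x 0 : ℝ) ^ 2)
        * Real.exp (-(Real.pi * s1) * (((x 0 - x 1 : ℤ)) : ℝ) ^ 2) := by ring
    _ ≤ u (x 0) * u (x 0 - x 1) := by
        apply mul_le_mul h1 h2 (Real.exp_pos _).le (u_nonneg _)

end Aux

/-- The theta constant denominator does not vanish at the CM point `Z₀`. -/
theorem theta_Zcm_ne_zero : Theta 0 Zcm 0 0 ≠ 0 := by
  set f : (Fin 2 → ℤ) → ℂ := fun x =>
    e ((fun i => (x i : ℂ) + (((0 : Fin 2 → ℝ)) i : ℂ)) ⬝ᵥ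
        Zcm.mulVec (fun i => (x i : ℂ) + (((0 : Fin 2 → ℝ)) i : ℂ)) / 2
      + (fun i => (x i : ℂ) + (((0 : Fin 2 → ℝ)) i : ℂ)) ⬝ᵥ
        ((0 : Fin 2 → ℂ) + fun i => ((((0 : Fin 2 → ℝ)) i : ℝ) : ℂ))) with hf_def
  have hTheta : Theta 0 Zcm 0 0 = ∑' x, f x := rfl
  have hnorm : ∀ x, ‖f x‖ ≤ gmaj x := by
    intro x
    rw [hf_def]
    rw [norm_term x]
    exact term_le_gmaj x
  have hf : Summable f := Summable.of_norm_bounded summable_gmaj hnorm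
  have hf0 : f 0 = 1 := by
    rw [hf_def]
    simp only [Zcm_eq, Mmat, e, dotProduct, Matrix.mulVec, Fin.sum_univ_two,
      Pi.zero_apply, Int.cast_zero, Complex.ofReal_zero, add_zero, zero_add, zero_mul,
      mul_zero, Fin.isValue, zero_div]
    exact Complex.exp_zero
  have hsplit := Summable.tsum_eq_add_tsum_ite hf 0
  -- bound the remainder
  have hgite : Summable (fun x : Fin 2 → ℤ => if x = 0 then 0 else gmaj x) := by
    apply Summable.of_nonneg_of_le _ _ summable_gmaj
    · intro x
      by_cases h : x = 0 <;> simp [h, gmaj_nonneg]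
    · intro x
      by_cases h : x = 0 <;> simp [h, gmaj_nonneg]
  have hnormite : ∀ x : Fin 2 → ℤ, ‖(if x = 0 then 0 else f x : ℂ)‖
      ≤ (if x = 0 then 0 else gmaj x) := by
    intro x
    by_cases h : x = 0
    · simp [h]
    · rw [if_neg h, if_neg h]
      exact hnorm x
  have hR : ‖∑' x : Fin 2 → ℤ, (if x = 0 then 0 else f x)‖ ≤ 24 / 25 := by
    have hb := tsum_of_norm_bounded hgite.hasSum hnormite
    have hval : (∑' x : Fin 2 → ℤ, (if x = 0 then 0 else gmaj x)) ≤ 24 / 25 := by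
      have h1 := Summable.tsum_eq_add_tsum_ite summable_gmaj 0
      have h2 := tsum_gmaj_le
      rw [gmaj_zero] at h1
      linarith [h1 ▸ h2]
    linarith [hb, hval]
  rw [hTheta, hsplit, hf0]
  intro hzero
  have : ‖∑' x : Fin 2 → ℤ, (if x = 0 then 0 else f x)‖ = 1 := by
    have h := eq_neg_of_add_eq_zero_right hzero
    rw [h]
    simp
  linarith [hR, this.symm.le]
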